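/- Let f : ℝᴺ × ℝ → ℝ be continuous with F(x,t) = ∫₀ᵗ f(x,s) ds, and assume there exists μ > 2 such that 0 ≤ μ F(x,t) ≤ t f(x,t) for all (x,t) ∈ ℝᴺ × ℝ (condition (WAR)). Then f satisfies condition (Ta): with θ₀ = √(1 − 2/μ) ∈ (0,1), for every θ ∈ [0,θ₀] and all (x,t), ((1 − θ²)/2)·t·f(x,t) ≥ F(x,t) − F(x,θt). -/
import Mathlib


open Filter Topology

/-- **(WAR) implies (Ta).** Let `f : ℝᴺ × ℝ → ℝ` be continuous with primitive
`F(x,t) = ∫₀ᵗ f(x,s) ds`, and suppose there is `μ > 2` with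
`0 ≤ μ F(x,t) ≤ t f(x,t)` for all `(x,t)`. Then with `θ₀ = √(1 − 2/μ) ∈ (0,1)`,
for every `θ ∈ [0,θ₀]` and all `(x,t)`:
`((1 − θ²)/2)·t·f(x,t) ≥ F(x,t) − F(x,θt)`. -/
theorem WAR_implies_Ta (N : ℕ)
    (f F : (Fin N → ℝ) → ℝ → ℝ)
    (hf : Continuous fun p : (Fin N → ℝ) × ℝ => f p.1 p.2)
    (hF : ∀ x t, F x t = ∫ s in (0:ℝ)..t, f x s)
    (μ : ℝ) (hμ : 2 < μ)
    -- (WAR)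
    (hWAR : ∀ x t, 0 ≤ μ * F x t ∧ μ * F x t ≤ t * f x t) :
    Real.sqrt (1 - 2 / μ) ∈ Set.Ioo (0:ℝ) 1 ∧
    ∀ θ : ℝ, θ ∈ Set.Icc (0:ℝ) (Real.sqrt (1 - 2 / μ)) → ∀ x t,
      ((1 - θ ^ 2) / 2) * (t * f x t) ≥ F x t - F x (θ * t) := by
  have hμ0 : (0:ℝ) < μ := by linarith
  have h1 : (0:ℝ) < 1 - 2 / μ := by
    rw [sub_pos, div_lt_one hμ0]; exact hμ
  constructor
  · constructor
    · exact Real.sqrt_pos.mpr h1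
    · have h2 : 0 < 2 / μ := by positivity
      have : Real.sqrt (1 - 2 / μ) < Real.sqrt 1 :=
        Real.sqrt_lt_sqrt (le_of_lt h1) (by linarith)
      simpa using this
  · intro θ hθ x t
    have hθ0 := hθ.1
    have hθsq : θ ^ 2 ≤ 1 - 2 / μ := by
      have := sq_le_sq' (by linarith [Real.sqrt_nonneg (1 - 2/μ)] : -(Real.sqrt (1 - 2/μ)) ≤ θ) hθ.2
      simpa [Real.sq_sqrt (le_of_lt h1)] using this
    have hcoef : 1 / μ ≤ (1 - θ ^ 2) / 2 := by
      rw [div_le_div_iff₀ hμ0 (by norm_num)]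
      have : 2 / μ ≤ 1 - θ ^ 2 := by linarith
      calc 1 * 2 = (2 / μ) * μ := by field_simp
        _ ≤ (1 - θ ^ 2) * μ := by
            exact mul_le_mul_of_nonneg_right this (le_of_lt hμ0)
    have hFt := hWAR x t
    have hFθt := (hWAR x (θ * t)).1
    have hFθt0 : 0 ≤ F x (θ * t) := nonneg_of_mul_nonneg_right hFθt hμ0
    have htf0 : 0 ≤ t * f x t := le_trans hFt.1 hFt.2
    have hFle : F x t ≤ (1 / μ) * (t * f x t) := by
      rw [div_mul_eq_mul_div, le_div_iff₀ hμ0, mul_comm]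
      simpa using hFt.2
    have : (1 / μ) * (t * f x t) ≤ ((1 - θ ^ 2) / 2) * (t * f x t) :=
      mul_le_mul_of_nonneg_right hcoef htf0
    have : F x t ≤ ((1 - θ ^ 2) / 2) * (t * f x t) := le_trans hFle this
    linarith
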